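/- In an involutory quasi-Hopf algebra one has the identities x³α⁻¹S(x²)β⁻¹x¹ = 1 and S(X³)β⁻¹X²α⁻¹S(X¹) = 1, where Φ = X¹⊗X²⊗X³ and Φ⁻¹ = x¹⊗x²⊗x³. -/

import Mathlib

open TensorProduct BigOperators

/-- A quasi-bialgebra (Drinfeld), with reassociator `Φ` presented as an explicit finite
sum of pure tensors `∑ i, X1 i ⊗ X2 i ⊗ X3 i`, and `Φ⁻¹ = ∑ j, x1 j ⊗ x2 j ⊗ x3 j`. -/
structure QuasiBialgebra (k H : Type*) [Field k] [Ring H] [Algebra k H]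
    (ι κ : Type*) [Fintype ι] [Fintype κ] where
  Δ : H →ₐ[k] H ⊗[k] H
  ε : H →ₐ[k] k
  X1 : ι → H
  X2 : ι → H
  X3 : ι → H
  x1 : κ → H
  x2 : κ → H
  x3 : κ → H
  Φ_inv_right :
    (∑ i, X1 i ⊗ₜ[k] (X2 i ⊗ₜ[k] X3 i)) * (∑ j, x1 j ⊗ₜ[k] (x2 j ⊗ₜ[k] x3 j)) = 1
  Φ_inv_left :
    (∑ j, x1 j ⊗ₜ[k] (x2 j ⊗ₜ[k] x3 j)) * (∑ i, X1 i ⊗ₜ[k] (X2 i ⊗ₜ[k] X3 i)) = 1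
  quasi_coassoc : ∀ h : H,
    (Algebra.TensorProduct.map (AlgHom.id k H) Δ) (Δ h)
        * (∑ i, X1 i ⊗ₜ[k] (X2 i ⊗ₜ[k] X3 i)) =
      (∑ i, X1 i ⊗ₜ[k] (X2 i ⊗ₜ[k] X3 i))
        * (Algebra.TensorProduct.assoc k k k H H H)
            ((Algebra.TensorProduct.map Δ (AlgHom.id k H)) (Δ h))
  counit_right : ∀ h : H,
    (TensorProduct.rid k H) (TensorProduct.map LinearMap.id ε.toLinearMap (Δ h)) = h
  counit_left : ∀ h : H,
    (TensorProduct.lid k H) (TensorProduct.map ε.toLinearMap LinearMap.id (Δ h)) = h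
  cocycle :
    ((∑ i, (1 : H) ⊗ₜ[k] (X1 i ⊗ₜ[k] (X2 i ⊗ₜ[k] X3 i)))
        * (∑ i, X1 i ⊗ₜ[k] ((Algebra.TensorProduct.assoc k k k H H H) (Δ (X2 i) ⊗ₜ[k] X3 i)))
        * (∑ i, X1 i ⊗ₜ[k] (X2 i ⊗ₜ[k] (X3 i ⊗ₜ[k] (1 : H)))))
      = (∑ i, X1 i ⊗ₜ[k] (X2 i ⊗ₜ[k] Δ (X3 i)))
        * (∑ i, (Algebra.TensorProduct.assoc k k k H H (H ⊗[k] H))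
            (Δ (X1 i) ⊗ₜ[k] (X2 i ⊗ₜ[k] X3 i)))
  counit_Φ : (∑ i, ε (X2 i) • (X1 i ⊗ₜ[k] X3 i)) = 1

/-- A quasi-Hopf algebra: a quasi-bialgebra with an anti-algebra map `S` and
distinguished elements `α`, `β` satisfying Drinfeld's antipode axioms. -/
structure QuasiHopf (k H : Type*) [Field k] [Ring H] [Algebra k H]
    (ι κ : Type*) [Fintype ι] [Fintype κ] extends QuasiBialgebra k H ι κ where
  S : H →ₗ[k] H
  S_mul : ∀ a b : H, S (a * b) = S b * S a
  S_one : S 1 = 1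
  α : H
  β : H
  antipode_left : ∀ h : H,
    LinearMap.mul' k H
      (TensorProduct.map ((LinearMap.mulRight k α).comp S) LinearMap.id (Δ h)) = ε h • α
  antipode_right : ∀ h : H,
    LinearMap.mul' k H
      (TensorProduct.map (LinearMap.mulRight k β) S (Δ h)) = ε h • β
  antipode_Φ : ∑ i, X1 i * β * S (X2 i) * α * X3 i = 1
  antipode_Φinv : ∑ j, S (x1 j) * α * x2 j * β * S (x3 j) = 1

/-- A quasitriangular quasi-Hopf algebra: `R = ∑ a, r1 a ⊗ r2 a`,
`R⁻¹ = ∑ b, ri1 b ⊗ ri2 b`, with the quasitriangularity axioms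
`(Δ ⊗ id)(R) = Φ₂₃₁ R₁₃ Φ₁₃₂⁻¹ R₂₃ Φ`, `(id ⊗ Δ)(R) = Φ₂₃₁⁻¹ R₁₃ Φ₂₁₃ R₁₂ Φ⁻¹`
and `Δᶜᵒᵖ(h) R = R Δ(h)`, all written out on pure tensors. -/
structure QuasiTriangular (k H : Type*) [Field k] [Ring H] [Algebra k H]
    (ι κ ρ σ : Type*) [Fintype ι] [Fintype κ] [Fintype ρ] [Fintype σ]
    extends QuasiHopf k H ι κ where
  r1 : ρ → H
  r2 : ρ → H
  ri1 : σ → H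
  ri2 : σ → H
  R_inv_right : (∑ a, r1 a ⊗ₜ[k] r2 a) * (∑ b, ri1 b ⊗ₜ[k] ri2 b) = 1
  R_inv_left : (∑ b, ri1 b ⊗ₜ[k] ri2 b) * (∑ a, r1 a ⊗ₜ[k] r2 a) = 1
  qt1 : (∑ a, (Algebra.TensorProduct.assoc k k k H H H) (Δ (r1 a) ⊗ₜ[k] r2 a))
      = (∑ i, X2 i ⊗ₜ[k] (X3 i ⊗ₜ[k] X1 i))
        * (∑ a, r1 a ⊗ₜ[k] ((1 : H) ⊗ₜ[k] r2 a))
        * (∑ j, x1 j ⊗ₜ[k] (x3 j ⊗ₜ[k] x2 j))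
        * (∑ a, (1 : H) ⊗ₜ[k] (r1 a ⊗ₜ[k] r2 a))
        * (∑ i, X1 i ⊗ₜ[k] (X2 i ⊗ₜ[k] X3 i))
  qt2 : (∑ a, r1 a ⊗ₜ[k] Δ (r2 a))
      = (∑ j, x3 j ⊗ₜ[k] (x1 j ⊗ₜ[k] x2 j))
        * (∑ a, r1 a ⊗ₜ[k] ((1 : H) ⊗ₜ[k] r2 a))
        * (∑ i, X2 i ⊗ₜ[k] (X1 i ⊗ₜ[k] X3 i))
        * (∑ a, r1 a ⊗ₜ[k] (r2 a ⊗ₜ[k] (1 : H)))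
        * (∑ j, x1 j ⊗ₜ[k] (x2 j ⊗ₜ[k] x3 j))
  qt3 : ∀ h : H,
    (TensorProduct.comm k H H) (Δ h) * (∑ a, r1 a ⊗ₜ[k] r2 a)
      = (∑ a, r1 a ⊗ₜ[k] r2 a) * Δ h

/-- The Drinfeld element `u = S(R² x² β S(x³)) α R¹ x¹` of a quasitriangular
quasi-Hopf algebra. -/
noncomputable def QuasiTriangular.u {k H : Type*} [Field k] [Ring H] [Algebra k H]
    {ι κ ρ σ : Type*} [Fintype ι] [Fintype κ] [Fintype ρ] [Fintype σ]
    (Q : QuasiTriangular k H ι κ ρ σ) : H :=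
  ∑ a, ∑ j, Q.S (Q.r2 a * Q.x2 j * Q.β * Q.S (Q.x3 j)) * Q.α * (Q.r1 a * Q.x1 j)

/-- In an involutory quasi-Hopf algebra (where `α` and `β` are
invertible), one has `x³ α⁻¹ S(x²) β⁻¹ x¹ = 1` and `S(X³) β⁻¹ X² α⁻¹ S(X¹) = 1`. -/
theorem involutory_phi_identities
    {k H : Type*} [Field k] [Ring H] [Algebra k H]
    {ι κ : Type*} [Fintype ι] [Fintype κ]
    (Q : QuasiHopf k H ι κ)
    (hinv : ∀ h : H, Q.S (Q.S h) = Q.S Q.β * Q.α * h * Q.β * Q.S Q.α)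
    (αi βi : H)
    (hαi : Q.α * αi = 1) (hαi' : αi * Q.α = 1)
    (hβi : Q.β * βi = 1) (hβi' : βi * Q.β = 1)
    (hαi_eq : Q.β * Q.S (Q.β * Q.α) = αi)
    (hβi_eq : Q.S (Q.β * Q.α) * Q.α = βi)
    (hβi_coprod : ∀ h : H, LinearMap.mul' k H
      (TensorProduct.map ((LinearMap.mulRight k βi).comp Q.S) LinearMap.id
        ((TensorProduct.comm k H H) (Q.Δ h))) = Q.ε h • βi)
    (hαi_coprod : ∀ h : H, LinearMap.mul' k H
      (TensorProduct.map (LinearMap.mulRight k αi) Q.S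
        ((TensorProduct.comm k H H) (Q.Δ h))) = Q.ε h • αi) :
    (∑ j, Q.x3 j * αi * Q.S (Q.x2 j) * βi * Q.x1 j = 1)
    ∧ (∑ i, Q.S (Q.X3 i) * βi * Q.X2 i * αi * Q.S (Q.X1 i) = 1) := by
  have hcd : (Q.S Q.β * Q.α) * (Q.β * Q.S Q.α) = 1 := by
    have h1 := hinv 1
    rw [Q.S_one, Q.S_one, mul_one] at h1
    simp only [mul_assoc]
    simp only [mul_assoc] at h1
    exact h1.symm
  have hdc : (Q.β * Q.S Q.α) * (Q.S Q.β * Q.α) = 1 := by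
    have h := hαi'
    rw [← hαi_eq, Q.S_mul] at h
    simp only [mul_assoc]
    simp only [mul_assoc] at h
    exact h
  constructor
  · -- first identity
    have term1 : ∀ j, (Q.S Q.β * Q.α) * (Q.x3 j * αi * Q.S (Q.x2 j) * βi * Q.x1 j) * (Q.β * Q.S Q.α)
        = Q.S (Q.S (Q.x1 j) * Q.α * Q.x2 j * Q.β * Q.S (Q.x3 j)) := by
      intro j
      simp only [← hαi_eq, ← hβi_eq, Q.S_mul, hinv]
      simp only [mul_assoc]
    have key1 : (Q.S Q.β * Q.α) * (∑ j, Q.x3 j * αi * Q.S (Q.x2 j) * βi * Q.x1 j) * (Q.β * Q.S Q.α) = 1 := by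
      rw [Finset.mul_sum, Finset.sum_mul]
      have : ∑ j, (Q.S Q.β * Q.α) * (Q.x3 j * αi * Q.S (Q.x2 j) * βi * Q.x1 j) * (Q.β * Q.S Q.α)
          = ∑ j, Q.S (Q.S (Q.x1 j) * Q.α * Q.x2 j * Q.β * Q.S (Q.x3 j)) :=
        Finset.sum_congr rfl (fun j _ => term1 j)
      rw [this, ← map_sum, Q.antipode_Φinv, Q.S_one]
    calc (∑ j, Q.x3 j * αi * Q.S (Q.x2 j) * βi * Q.x1 j)
        = ((Q.β * Q.S Q.α) * (Q.S Q.β * Q.α)) * (∑ j, Q.x3 j * αi * Q.S (Q.x2 j) * βi * Q.x1 j)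
            * ((Q.β * Q.S Q.α) * (Q.S Q.β * Q.α)) := by
          rw [hdc, one_mul, mul_one]
      _ = (Q.β * Q.S Q.α) * ((Q.S Q.β * Q.α) * (∑ j, Q.x3 j * αi * Q.S (Q.x2 j) * βi * Q.x1 j)
            * (Q.β * Q.S Q.α)) * (Q.S Q.β * Q.α) := by
          simp only [mul_assoc]
      _ = (Q.β * Q.S Q.α) * 1 * (Q.S Q.β * Q.α) := by rw [key1]
      _ = 1 := by rw [mul_one, hdc]
  · -- second identity
    have term2 : ∀ i, Q.S (Q.X1 i * Q.β * Q.S (Q.X2 i) * Q.α * Q.X3 i)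
        = Q.S (Q.X3 i) * βi * Q.X2 i * αi * Q.S (Q.X1 i) := by
      intro i
      simp only [← hαi_eq, ← hβi_eq, Q.S_mul, hinv]
      simp only [mul_assoc]
    calc (∑ i, Q.S (Q.X3 i) * βi * Q.X2 i * αi * Q.S (Q.X1 i))
        = ∑ i, Q.S (Q.X1 i * Q.β * Q.S (Q.X2 i) * Q.α * Q.X3 i) :=
          (Finset.sum_congr rfl (fun i _ => term2 i)).symm
      _ = Q.S (∑ i, Q.X1 i * Q.β * Q.S (Q.X2 i) * Q.α * Q.X3 i) := (map_sum _ _ _).symm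
      _ = 1 := by rw [Q.antipode_Φ, Q.S_one]
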